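/- Let ρ be a probability density on [φ_A - π/2, φ_A + π/2] such that for every angle φ_B ∈ [φ_A - π, φ_A + π], ∫ ρ(φ) sign(cos(φ - φ_B)) dφ = cos(φ_B - φ_A). Then ρ(φ) = (1/2) cos(φ - φ_A) (as densities, i.e., almost everywhere given continuity). -/

import Mathlib

open Real Set intervalIntegral MeasureTheory

/-- If a continuous probability density `ρ` on `[φ_A - π/2, φ_A + π/2]` satisfies
`∫ ρ(φ) sign(cos(φ - φ_B)) dφ = cos(φ_B - φ_A)` for every `φ_B ∈ [φ_A - π, φ_A + π]`,
then `ρ(φ) = (1/2) cos(φ - φ_A)` on the interval. -/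
theorem density_determined_by_sign_integrals (φA : ℝ) (ρ : ℝ → ℝ)
    (hcont : ContinuousOn ρ (Icc (φA - π / 2) (φA + π / 2)))
    (hpos : ∀ φ ∈ Icc (φA - π / 2) (φA + π / 2), 0 ≤ ρ φ)
    (hnorm : ∫ φ in (φA - π / 2)..(φA + π / 2), ρ φ = 1)
    (h : ∀ φB ∈ Icc (φA - π) (φA + π),
      ∫ φ in (φA - π / 2)..(φA + π / 2),
          ρ φ * (if 0 ≤ Real.cos (φ - φB) then (1 : ℝ) else -1)
        = Real.cos (φB - φA)) :
    ∀ φ ∈ Icc (φA - π / 2) (φA + π / 2), ρ φ = (1 / 2) * Real.cos (φ - φA) := by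
  have hπ := Real.pi_pos
  set a := φA - π / 2 with ha
  set b := φA + π / 2 with hb
  have hab : a < b := by rw [ha, hb]; linarith
  have hρint : ∀ x ∈ Icc a b, ∀ y ∈ Icc a b, IntervalIntegrable ρ volume x y := by
    intro x hx y hy
    exact (hcont.mono (uIcc_subset_Icc hx hy)).intervalIntegrable
  -- Step 1: the CDF identity
  have hF : ∀ ψ ∈ Icc a b, (∫ φ in a..ψ, ρ φ) = (1 + Real.sin (ψ - φA)) / 2 := by
    intro ψ hψ
    have hψ1 : a ≤ ψ := hψ.1
    have hψ2 : ψ ≤ b := hψ.2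
    have hφB : ψ + π / 2 ∈ Icc (φA - π) (φA + π) := by
      rw [ha] at hψ1; rw [hb] at hψ2
      exact ⟨by linarith, by linarith⟩
    have key := h (ψ + π / 2) hφB
    have hane : ∀ᵐ φ : ℝ, φ ≠ ψ := by
      refine MeasureTheory.ae_iff.2 ?_
      simpa using MeasureTheory.measure_singleton (μ := (volume : Measure ℝ)) ψ
    -- on (a, ψ) the sign is -1
    have h1 : ∀ᵐ φ : ℝ, φ ∈ uIoc a ψ →
        ρ φ * (if 0 ≤ Real.cos (φ - (ψ + π / 2)) then (1:ℝ) else -1) = -ρ φ := by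
      filter_upwards [hane] with φ hne hmem
      rw [uIoc_of_le hψ1] at hmem
      have hge : ψ - π ≤ a := by rw [ha]; rw [hb] at hψ2; linarith
      have h2 : φ - ψ < 0 := lt_of_le_of_ne (by linarith [hmem.2])
        (fun hc => hne (by linarith))
      have hcos : Real.cos (φ - (ψ + π / 2)) = Real.sin (φ - ψ) := by
        rw [show φ - (ψ + π / 2) = (φ - ψ) - π / 2 by ring, Real.cos_sub_pi_div_two]
      rw [hcos, if_neg (not_le.2 (Real.sin_neg_of_neg_of_neg_pi_lt h2
        (by linarith [hmem.1])))]
      ring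
    -- on (ψ, b) the sign is +1
    have h2 : ∀ᵐ φ : ℝ, φ ∈ uIoc ψ b →
        ρ φ * (if 0 ≤ Real.cos (φ - (ψ + π / 2)) then (1:ℝ) else -1) = ρ φ := by
      filter_upwards with φ hmem
      rw [uIoc_of_le hψ2] at hmem
      have hle : b ≤ ψ + π := by rw [hb]; rw [ha] at hψ1; linarith
      have hcos : Real.cos (φ - (ψ + π / 2)) = Real.sin (φ - ψ) := by
        rw [show φ - (ψ + π / 2) = (φ - ψ) - π / 2 by ring, Real.cos_sub_pi_div_two]
      rw [hcos, if_pos (Real.sin_nonneg_of_nonneg_of_le_pi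
        (by linarith [hmem.1]) (by linarith [hmem.2]))]
      ring
    have hmem_a : a ∈ Icc a b := ⟨le_refl _, hab.le⟩
    have hmem_b : b ∈ Icc a b := ⟨hab.le, le_refl _⟩
    have hi1 : IntervalIntegrable
        (fun φ => ρ φ * (if 0 ≤ Real.cos (φ - (ψ + π / 2)) then (1:ℝ) else -1)) volume a ψ :=
      ((hρint a hmem_a ψ hψ).neg).congr_ae (by
        refine (MeasureTheory.ae_restrict_iff' measurableSet_uIoc).2 ?_
        filter_upwards [h1] with φ hφ hmem
        rw [hφ hmem]; rfl)
    have hi2 : IntervalIntegrable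
        (fun φ => ρ φ * (if 0 ≤ Real.cos (φ - (ψ + π / 2)) then (1:ℝ) else -1)) volume ψ b :=
      (hρint ψ hψ b hmem_b).congr_ae (by
        refine (MeasureTheory.ae_restrict_iff' measurableSet_uIoc).2 ?_
        filter_upwards [h2] with φ hφ hmem
        rw [hφ hmem])
    rw [← intervalIntegral.integral_add_adjacent_intervals hi1 hi2,
      intervalIntegral.integral_congr_ae h1, intervalIntegral.integral_congr_ae h2,
      intervalIntegral.integral_neg] at key
    have hsplit : (∫ φ in a..ψ, ρ φ) + (∫ φ in ψ..b, ρ φ) = 1 := by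
      rw [intervalIntegral.integral_add_adjacent_intervals
        (hρint a hmem_a ψ hψ) (hρint ψ hψ b hmem_b)]
      exact hnorm
    have hcosval : Real.cos (ψ + π / 2 - φA) = -Real.sin (ψ - φA) := by
      rw [show ψ + π / 2 - φA = (ψ - φA) + π / 2 by ring, Real.cos_add_pi_div_two]
    rw [hcosval] at key
    linarith
  -- Step 2: interior points by FTC
  have hint : ∀ x ∈ Ioo a b, ρ x = (1 / 2) * Real.cos (x - φA) := by
    intro x hx
    have hxIcc : x ∈ Icc a b := Ioo_subset_Icc_self hx
    have hnhds : Icc a b ∈ nhds x := Icc_mem_nhds hx.1 hx.2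
    have hcx : ContinuousAt ρ x := hcont.continuousAt hnhds
    have hmeas : StronglyMeasurableAtFilter ρ (nhds x) volume :=
      ContinuousOn.stronglyMeasurableAtFilter isOpen_Ioo
        (hcont.mono Ioo_subset_Icc_self) x hx
    have hd1 : HasDerivAt (fun u => ∫ φ in a..u, ρ φ) (ρ x) x :=
      intervalIntegral.integral_hasDerivAt_right
        (hρint a ⟨le_refl _, hab.le⟩ x hxIcc) hmeas hcx
    have heq : (fun u => ∫ φ in a..u, ρ φ) =ᶠ[nhds x]
        (fun u => (1 + Real.sin (u - φA)) / 2) := by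
      filter_upwards [hnhds] with u hu
      exact hF u hu
    have hd2 : HasDerivAt (fun u => (1 + Real.sin (u - φA)) / 2) (ρ x) x :=
      hd1.congr_of_eventuallyEq heq.symm
    have hd3 : HasDerivAt (fun u => (1 + Real.sin (u - φA)) / 2)
        (Real.cos (x - φA) / 2) x := by
      have hs : HasDerivAt (fun u : ℝ => Real.sin (u - φA)) (Real.cos (x - φA)) x := by
        have := (Real.hasDerivAt_sin (x - φA)).comp x
          ((hasDerivAt_id x).sub_const φA)
        simpa [Function.comp_def] using this
      have := ((hs.const_add 1).div_const 2)
      simpa using this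
    have := hd2.unique hd3
    rw [this]; ring
  -- Step 3: extend to the closed interval by continuity
  intro φ hφ
  have hclos : φ ∈ closure (Ioo a b) := by
    rw [closure_Ioo hab.ne]; exact hφ
  have hne : (nhdsWithin φ (Ioo a b)).NeBot :=
    mem_closure_iff_nhdsWithin_neBot.mp hclos
  have ht1 : Filter.Tendsto ρ (nhdsWithin φ (Ioo a b)) (nhds (ρ φ)) :=
    (hcont φ hφ).mono_left (nhdsWithin_mono φ Ioo_subset_Icc_self)
  have ht2 : Filter.Tendsto (fun u => (1 / 2) * Real.cos (u - φA))
      (nhdsWithin φ (Ioo a b)) (nhds ((1 / 2) * Real.cos (φ - φA))) := by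
    apply Filter.Tendsto.mono_left _ nhdsWithin_le_nhds
    exact ((continuous_const.mul (Real.continuous_cos.comp
      (continuous_id.sub continuous_const))).continuousAt).tendsto
  have ht1' : Filter.Tendsto ρ (nhdsWithin φ (Ioo a b))
      (nhds ((1 / 2) * Real.cos (φ - φA))) := by
    refine ht2.congr' ?_
    filter_upwards [self_mem_nhdsWithin] with u hu
    exact (hint u hu).symm
  exact tendsto_nhds_unique ht1' ht1 |>.symm
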